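/- Fix t₀ ∈ ℝ, T > 0, b > 0 and a continuous function μ : [t₀, t₀+T) → [b, ∞). Let E₁, E₂ be real normed vector spaces, let V₁ : E₁ → ℝ and V₂ : E₂ → ℝ be functions, let α̲₁, ᾱ₁, α̲₂, ᾱ₂, α₁, α₂, γ₁, γ₂ be class-K∞ functions, and let l₁, l₂ > 0 and ε̄₁, ε̄₂ ≥ 0 be constants such that: (i) α̲ᵢ(‖x‖) ≤ Vᵢ(x) ≤ ᾱᵢ(‖x‖) for all x ∈ Eᵢ (i = 1,2); (ii) l₁·l₂ < 1; (iii) M := sup_{s>0} (γ₁(s)+γ₂(s))/min{α₁(s), α₂(s)} < ∞. Then there exists a continuous strictly increasing function α̃ : [0,∞) → [0,∞) such that: for every pair of continuous trajectories χ₁ : [t₀, t₀+T) → E₁ and χ₂ : [t₀, t₀+T) → E₂ for which the maps t ↦ V₁(χ₁(t)) and t ↦ V₂(χ₂(t)) are differentiable on [t₀, t₀+T) with derivatives satisfying, for all t ∈ [t₀, t₀+T), (d/dt)V₁(χ₁(t)) ≤ −α₁(μ(t))·V₁(χ₁(t)) + l₁·α₂(μ(t))·V₂(χ₂(t)) + γ₁(μ(t))·ε̄₁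 and (d/dt)V₂(χ₂(t)) ≤ −α₂(μ(t))·V₂(χ₂(t)) + l₂·α₁(μ(t))·V₁(χ₁(t)) + γ₂(μ(t))·ε̄₂, one has ‖χ₁(t)‖ + ‖χ₂(t)‖ ≤ α̃(‖χ₁(t₀)‖ + ‖χ₂(t₀)‖) for every t ∈ [t₀, t₀+T). -/

import Mathlib

open Set Filter Topology

def ClassKInf (α : ℝ → ℝ) : Prop :=
  ContinuousOn α (Ici 0) ∧ StrictMonoOn α (Ici 0) ∧ α 0 = 0 ∧
    Tendsto α atTop atTop

namespace ClassKInf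

lemma nonneg {α : ℝ → ℝ} (h : ClassKInf α) {x : ℝ} (hx : 0 ≤ x) : 0 ≤ α x := by
  rcases eq_or_lt_of_le hx with rfl | hx'
  · exact le_of_eq h.2.2.1.symm
  · exact le_of_lt (h.2.2.1 ▸ h.2.1 self_mem_Ici hx hx')

lemma pos {α : ℝ → ℝ} (h : ClassKInf α) {x : ℝ} (hx : 0 < x) : 0 < α x :=
  h.2.2.1 ▸ h.2.1 self_mem_Ici hx.le hx

lemma exists_inverse {α : ℝ → ℝ} (h : ClassKInf α) :
    ∃ ψ : ℝ → ℝ, ContinuousOn ψ (Ici 0) ∧ StrictMonoOn ψ (Ici 0) ∧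
      ∀ y, 0 ≤ y → 0 ≤ ψ y ∧ α (ψ y) = y := by
  obtain ⟨hc, hm, h0, htop⟩ := h
  have hk : ClassKInf α := ⟨hc, hm, h0, htop⟩
  let F : Ici (0:ℝ) → Ici (0:ℝ) := fun x => ⟨α x.1, hk.nonneg x.2⟩
  have hF : StrictMono F := fun x y hxy =>
    Subtype.mk_lt_mk.mpr (hm x.2 y.2 (Subtype.coe_lt_coe.mpr hxy))
  have hFs : Function.Surjective F := by
    rintro ⟨y, hy⟩
    obtain ⟨s, hsy, hs0⟩ := ((htop.eventually_ge_atTop y).and (eventually_ge_atTop 0)).exists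
    obtain ⟨c', hc', hcy⟩ := intermediate_value_Icc hs0 (hc.mono (Icc_subset_Ici_self))
      (⟨by rw [h0]; exact hy, hsy⟩ : y ∈ Icc (α 0) (α s))
    exact ⟨⟨c', hc'.1⟩, Subtype.ext hcy⟩
  let e := StrictMono.orderIsoOfSurjective F hF hFs
  refine ⟨fun y => (e.symm ⟨max y 0, Set.mem_Ici.mpr (le_max_right _ _)⟩ : Ici (0:ℝ)).1, ?_, ?_, ?_⟩
  · have : Continuous fun y : ℝ => (e.symm ⟨max y 0, Set.mem_Ici.mpr (le_max_right _ _)⟩ : Ici (0:ℝ)).1 := by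
      refine continuous_subtype_val.comp ?_
      exact (e.symm.toHomeomorph.continuous).comp
        ((continuous_id.max continuous_const).subtype_mk _)
    exact this.continuousOn
  · intro x hx y hy hxy
    have hlt : (⟨max x 0, Set.mem_Ici.mpr (le_max_right _ 0)⟩ : Ici (0:ℝ)) < ⟨max y 0, Set.mem_Ici.mpr (le_max_right _ 0)⟩ := by
      rw [Subtype.mk_lt_mk, max_eq_left hx, max_eq_left hy]; exact hxy
    exact Subtype.coe_lt_coe.mpr (e.symm.strictMono hlt)
  · intro y hy
    refine ⟨(e.symm ⟨max y 0, Set.mem_Ici.mpr (le_max_right _ _)⟩).2, ?_⟩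
    have := StrictMono.orderIsoOfSurjective_self_symm_apply F hF hFs ⟨max y 0, Set.mem_Ici.mpr (le_max_right _ _)⟩
    have := congrArg Subtype.val this
    simpa [F, max_eq_left hy] using this

end ClassKInf

lemma barrier {f : ℝ → ℝ} {a c B : ℝ} (hac : a ≤ c)
    (hd : ∀ x ∈ Icc a c, ∃ d, HasDerivAt f d x ∧ (B ≤ f x → d ≤ 0))
    (ha : f a ≤ B) : f c ≤ B := by
  by_contra hcB
  push_neg at hcB
  have hcont : ∀ x ∈ Icc a c, ContinuousAt f x := fun x hx =>
    (hd x hx).choose_spec.1.continuousAt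
  set S := {x | x ∈ Icc a c ∧ f x ≤ B} with hSdef
  have hSne : S.Nonempty := ⟨a, ⟨le_refl a, hac⟩, ha⟩
  have hSbdd : BddAbove S := ⟨c, fun x hx => hx.1.2⟩
  have hScl : IsClosed S := by
    refine isClosed_of_closure_subset ?_
    intro x hx
    have hxI : x ∈ Icc a c := isClosed_Icc.closure_subset
      (closure_mono (fun y hy => hy.1) hx)
    have hne : (𝓝[S] x).NeBot := mem_closure_iff_nhdsWithin_neBot.mp hx
    have htd : Tendsto f (𝓝[S] x) (𝓝 (f x)) := (hcont x hxI).continuousWithinAt.tendsto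
    exact ⟨hxI, le_of_tendsto htd (eventually_nhdsWithin_of_forall fun y hy => hy.2)⟩
  set s := sSup S with hs
  have hsS : s ∈ S := hScl.csSup_mem hSne hSbdd
  have hsc : s < c := lt_of_le_of_ne hsS.1.2 (fun h => absurd (h ▸ hsS.2) (not_le.mpr hcB))
  have hgt : ∀ x ∈ Ioc s c, B ≤ f x := by
    intro x hx
    by_contra hfx
    push_neg at hfx
    exact absurd (le_csSup hSbdd ⟨⟨hsS.1.1.trans hx.1.le, hx.2⟩, hfx.le⟩) (not_le.mpr hx.1)
  have hanti : AntitoneOn f (Icc s c) := by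
    apply antitoneOn_of_deriv_nonpos (convex_Icc s c)
    · exact fun x hx => (hcont x ⟨hsS.1.1.trans hx.1, hx.2⟩).continuousWithinAt
    · intro x hx
      rw [interior_Icc] at hx
      exact ((hd x ⟨hsS.1.1.trans hx.1.le, hx.2.le⟩).choose_spec.1).differentiableAt.differentiableWithinAt
    · intro x hx
      rw [interior_Icc] at hx
      obtain ⟨d, hdd, hdle⟩ := hd x ⟨hsS.1.1.trans hx.1.le, hx.2.le⟩
      rw [hdd.deriv]
      exact hdle (hgt x ⟨hx.1, hx.2.le⟩)
  exact absurd ((hanti ⟨le_refl s, hsc.le⟩ ⟨hsc.le, le_refl c⟩ hsc.le).trans hsS.2)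
    (not_le.mpr hcB)

lemma key_ineq {c₁ l₁ l₂ A₁ A₂ G₁ G₂ v₁ v₂ ε₁ ε₂ M d₁ d₂ : ℝ}
    (hc₁ : 0 < c₁) (hl₂c : l₂ < c₁) (hc₁l : c₁ * l₁ < 1)
    (hA₁ : 0 < A₁) (hA₂ : 0 < A₂) (hG₁ : 0 ≤ G₁) (hG₂ : 0 ≤ G₂)
    (hv₁ : 0 ≤ v₁) (hv₂ : 0 ≤ v₂) (hε₁ : 0 ≤ ε₁) (hε₂ : 0 ≤ ε₂) (hM : 0 ≤ M)
    (hGM : G₁ + G₂ ≤ M * min A₁ A₂)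
    (hd₁ : d₁ ≤ -A₁ * v₁ + l₁ * A₂ * v₂ + G₁ * ε₁)
    (hd₂ : d₂ ≤ -A₂ * v₂ + l₂ * A₁ * v₁ + G₂ * ε₂)
    (hKW : (max c₁ 1) ^ 2 * M * max ε₁ ε₂ / min (c₁ - l₂) (1 - c₁ * l₁) ≤ c₁ * v₁ + v₂) :
    c₁ * d₁ + d₂ ≤ 0 := by
  set m := min A₁ A₂ with hm
  set η := min (c₁ - l₂) (1 - c₁ * l₁) with hη
  set cm := max c₁ 1 with hcm
  set εb := max ε₁ ε₂ with hεb
  have hηpos : 0 < η := lt_min (by linarith) (by linarith)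
  have hmpos : 0 < m := lt_min hA₁ hA₂
  have hcm1 : (1:ℝ) ≤ cm := le_max_right _ _
  have hcmc : c₁ ≤ cm := le_max_left _ _
  have hcmpos : 0 < cm := lt_of_lt_of_le one_pos hcm1
  have hεbnn : 0 ≤ εb := le_trans hε₁ (le_max_left _ _)
  have hε1b : ε₁ ≤ εb := le_max_left _ _
  have hε2b : ε₂ ≤ εb := le_max_right _ _
  have hmA₁ : m ≤ A₁ := min_le_left _ _
  have hmA₂ : m ≤ A₂ := min_le_right _ _
  have hηc : η ≤ c₁ - l₂ := min_le_left _ _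
  have hηl : η ≤ 1 - c₁ * l₁ := min_le_right _ _
  have h0 : c₁ * d₁ + d₂ ≤ (l₂ - c₁) * (A₁ * v₁) + (c₁ * l₁ - 1) * (A₂ * v₂)
      + c₁ * G₁ * ε₁ + G₂ * ε₂ := by
    have hh := mul_le_mul_of_nonneg_left hd₁ hc₁.le
    linarith
  have h1 : (l₂ - c₁) * (A₁ * v₁) ≤ -(η * (m * v₁)) := by
    have hh : η * (m * v₁) ≤ (c₁ - l₂) * (A₁ * v₁) :=
      mul_le_mul hηc (mul_le_mul hmA₁ le_rfl hv₁ hA₁.le) (by positivity) (by linarith)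
    linarith
  have h2 : (c₁ * l₁ - 1) * (A₂ * v₂) ≤ -(η * (m * v₂)) := by
    have hh : η * (m * v₂) ≤ (1 - c₁ * l₁) * (A₂ * v₂) :=
      mul_le_mul hηl (mul_le_mul hmA₂ le_rfl hv₂ hA₂.le) (by positivity) (by linarith)
    linarith
  have h3 : c₁ * G₁ * ε₁ + G₂ * ε₂ ≤ cm * (M * m) * εb := by
    have h3a : c₁ * G₁ * ε₁ ≤ cm * G₁ * εb :=
      mul_le_mul (mul_le_mul hcmc le_rfl hG₁ hcmpos.le) hε1b hε₁ (by positivity)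
    have h3b : G₂ * ε₂ ≤ cm * G₂ * εb :=
      mul_le_mul (le_mul_of_one_le_left hG₂ hcm1) hε2b hε₂ (by positivity)
    have h3c : cm * G₁ * εb + cm * G₂ * εb ≤ cm * (M * m) * εb := by
      have hmul := mul_le_mul_of_nonneg_left (mul_le_mul_of_nonneg_right hGM hεbnn) hcmpos.le
      linarith
    linarith
  have h4 : cm * (M * m) * εb ≤ η * (m * v₁) + η * (m * v₂) := by
    have hW : cm ^ 2 * M * εb ≤ (c₁ * v₁ + v₂) * η := (div_le_iff₀ hηpos).mp hKW
    have hW2 : (c₁ * v₁ + v₂) * η ≤ η * cm * (v₁ + v₂) := by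
      have e1 : 0 ≤ η * ((cm - c₁) * v₁) := mul_nonneg hηpos.le (mul_nonneg (by linarith) hv₁)
      have e2 : 0 ≤ η * ((cm - 1) * v₂) := mul_nonneg hηpos.le (mul_nonneg (by linarith) hv₂)
      linarith
    have hW3 : cm * M * εb ≤ η * (v₁ + v₂) := by
      have h := hW.trans hW2
      have h' : cm * (cm * M * εb) ≤ cm * (η * (v₁ + v₂)) := by linarith
      exact le_of_mul_le_mul_left h' hcmpos
    have := mul_le_mul_of_nonneg_left hW3 hmpos.le
    linarith
  linarith

/-- Prescribed-time small-gain criterion (Theorem 1 of the paper). -/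
theorem prescribed_time_small_gain
    {E₁ E₂ : Type*} [NormedAddCommGroup E₁] [NormedSpace ℝ E₁]
    [NormedAddCommGroup E₂] [NormedSpace ℝ E₂]
    (t₀ T b : ℝ) (hT : 0 < T) (hb : 0 < b)
    (μ : ℝ → ℝ) (hμc : ContinuousOn μ (Ico t₀ (t₀ + T)))
    (hμb : ∀ t ∈ Ico t₀ (t₀ + T), b ≤ μ t)
    (V₁ : E₁ → ℝ) (V₂ : E₂ → ℝ)
    (αl₁ αu₁ αl₂ αu₂ α₁ α₂ γ₁ γ₂ : ℝ → ℝ)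
    (hαl₁ : ClassKInf αl₁) (hαu₁ : ClassKInf αu₁)
    (hαl₂ : ClassKInf αl₂) (hαu₂ : ClassKInf αu₂)
    (hα₁ : ClassKInf α₁) (hα₂ : ClassKInf α₂)
    (hγ₁ : ClassKInf γ₁) (hγ₂ : ClassKInf γ₂)
    (l₁ l₂ ε₁ ε₂ : ℝ) (hl₁ : 0 < l₁) (hl₂ : 0 < l₂)
    (hε₁ : 0 ≤ ε₁) (hε₂ : 0 ≤ ε₂)
    (hV₁ : ∀ x : E₁, αl₁ ‖x‖ ≤ V₁ x ∧ V₁ x ≤ αu₁ ‖x‖)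
    (hV₂ : ∀ x : E₂, αl₂ ‖x‖ ≤ V₂ x ∧ V₂ x ≤ αu₂ ‖x‖)
    (hll : l₁ * l₂ < 1)
    (M : ℝ) (hM : ∀ s : ℝ, 0 < s → (γ₁ s + γ₂ s) / min (α₁ s) (α₂ s) ≤ M) :
    ∃ αTil : ℝ → ℝ, ContinuousOn αTil (Ici 0) ∧ StrictMonoOn αTil (Ici 0) ∧
      ∀ (χ₁ : ℝ → E₁) (χ₂ : ℝ → E₂),
        ContinuousOn χ₁ (Ico t₀ (t₀ + T)) →
        ContinuousOn χ₂ (Ico t₀ (t₀ + T)) →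
        (∀ t ∈ Ico t₀ (t₀ + T),
          ∃ d₁ : ℝ, HasDerivAt (fun s => V₁ (χ₁ s)) d₁ t ∧
            d₁ ≤ -α₁ (μ t) * V₁ (χ₁ t) + l₁ * α₂ (μ t) * V₂ (χ₂ t)
                  + γ₁ (μ t) * ε₁) →
        (∀ t ∈ Ico t₀ (t₀ + T),
          ∃ d₂ : ℝ, HasDerivAt (fun s => V₂ (χ₂ s)) d₂ t ∧
            d₂ ≤ -α₂ (μ t) * V₂ (χ₂ t) + l₂ * α₁ (μ t) * V₁ (χ₁ t)
                  + γ₂ (μ t) * ε₂) →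
        ∀ t ∈ Ico t₀ (t₀ + T),
          ‖χ₁ t‖ + ‖χ₂ t‖ ≤ αTil (‖χ₁ t₀‖ + ‖χ₂ t₀‖) := by
  obtain ⟨ψ₁, hψ₁c, hψ₁m, hψ₁spec⟩ := hαl₁.exists_inverse
  obtain ⟨ψ₂, hψ₂c, hψ₂m, hψ₂spec⟩ := hαl₂.exists_inverse
  -- choice of the weight c₁ with l₂ < c₁ and c₁ * l₁ < 1
  have hll' : l₂ * l₁ < 1 := by rwa [mul_comm] at hll
  have hl2inv : l₂ < 1 / l₁ := (lt_div_iff₀ hl₁).mpr hll'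
  set c₁ : ℝ := (l₂ + 1 / l₁) / 2 with hc₁def
  have hc₁l : l₂ < c₁ := by rw [hc₁def]; linarith
  have hc₁lt : c₁ < 1 / l₁ := by rw [hc₁def]; linarith
  have hc₁u : c₁ * l₁ < 1 := (lt_div_iff₀ hl₁).mp hc₁lt
  have hc₁pos : 0 < c₁ := lt_trans hl₂ hc₁l
  have hM0 : 0 ≤ M := le_trans (div_nonneg (add_nonneg (hγ₁.nonneg hb.le) (hγ₂.nonneg hb.le))
    (lt_min (hα₁.pos hb) (hα₂.pos hb)).le) (hM b hb)
  set K : ℝ := (max c₁ 1) ^ 2 * M * max ε₁ ε₂ / min (c₁ - l₂) (1 - c₁ * l₁) with hKdef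
  have hηpos : (0:ℝ) < min (c₁ - l₂) (1 - c₁ * l₁) := lt_min (by linarith) (by linarith)
  have hK0 : 0 ≤ K := div_nonneg (mul_nonneg (mul_nonneg (by positivity) hM0)
    (le_trans hε₁ (le_max_left _ _))) hηpos.le
  have hminpos : (0:ℝ) < min c₁ 1 := lt_min hc₁pos one_pos
  set P : ℝ → ℝ := fun r => (max c₁ 1 * (αu₁ r + αu₂ r) + K) * (min c₁ 1)⁻¹ with hPdef
  have hPmaps : MapsTo P (Ici 0) (Ici 0) := by
    intro r hr
    have h1 : 0 ≤ αu₁ r := hαu₁.nonneg hr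
    have h2 : 0 ≤ αu₂ r := hαu₂.nonneg hr
    have : (0:ℝ) ≤ max c₁ 1 := le_trans zero_le_one (le_max_right _ _)
    exact mul_nonneg (by nlinarith) (inv_pos.mpr hminpos).le
  have hPmono : StrictMonoOn P (Ici 0) := by
    intro x hx y hy hxy
    have h1 := hαu₁.2.1 hx hy hxy
    have h2 := hαu₂.2.1 hx hy hxy
    have hcm : (0:ℝ) < max c₁ 1 := lt_of_lt_of_le one_pos (le_max_right _ _)
    have : max c₁ 1 * (αu₁ x + αu₂ x) + K < max c₁ 1 * (αu₁ y + αu₂ y) + K := by nlinarith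
    exact mul_lt_mul_of_pos_right this (inv_pos.mpr hminpos)
  have hPcont : ContinuousOn P (Ici 0) :=
    ((continuousOn_const.mul (hαu₁.1.add hαu₂.1)).add continuousOn_const).mul continuousOn_const
  refine ⟨fun r => ψ₁ (P r) + ψ₂ (P r), ?_, ?_, ?_⟩
  · exact (hψ₁c.comp hPcont hPmaps).add (hψ₂c.comp hPcont hPmaps)
  · intro x hx y hy hxy
    exact add_lt_add (hψ₁m (hPmaps hx) (hPmaps hy) (hPmono hx hy hxy))
      (hψ₂m (hPmaps hx) (hPmaps hy) (hPmono hx hy hxy))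
  · intro χ₁ χ₂ hχ₁ hχ₂ hD₁ hD₂ t ht
    have hV₁0 : ∀ x : E₁, 0 ≤ V₁ x := fun x =>
      le_trans (hαl₁.nonneg (norm_nonneg x)) (hV₁ x).1
    have hV₂0 : ∀ x : E₂, 0 ≤ V₂ x := fun x =>
      le_trans (hαl₂.nonneg (norm_nonneg x)) (hV₂ x).1
    have hIccsub : Icc t₀ t ⊆ Ico t₀ (t₀ + T) := fun x hx => ⟨hx.1, lt_of_le_of_lt hx.2 ht.2⟩
    set W : ℝ → ℝ := fun s => c₁ * V₁ (χ₁ s) + V₂ (χ₂ s) with hWdef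
    set B : ℝ := max (W t₀) K with hBdef
    -- the barrier argument
    have hWle : W t ≤ B := by
      refine barrier ht.1 ?_ (le_max_left _ _)
      intro x hx
      have hxI : x ∈ Ico t₀ (t₀ + T) := hIccsub hx
      obtain ⟨d₁, hd₁, hb₁⟩ := hD₁ x hxI
      obtain ⟨d₂, hd₂, hb₂⟩ := hD₂ x hxI
      refine ⟨c₁ * d₁ + d₂, (hd₁.const_mul c₁).add hd₂, ?_⟩
      intro hBW
      have hμx0 : 0 < μ x := lt_of_lt_of_le hb (hμb x hxI)
      have hmm : 0 < min (α₁ (μ x)) (α₂ (μ x)) := lt_min (hα₁.pos hμx0) (hα₂.pos hμx0)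
      have hGM : γ₁ (μ x) + γ₂ (μ x) ≤ M * min (α₁ (μ x)) (α₂ (μ x)) := by
        have := (div_le_iff₀ hmm).mp (hM (μ x) hμx0)
        linarith
      have hKW : K ≤ c₁ * V₁ (χ₁ x) + V₂ (χ₂ x) :=
        le_trans (le_max_right _ _) hBW
      exact key_ineq hc₁pos hc₁l hc₁u (hα₁.pos hμx0) (hα₂.pos hμx0)
        (hγ₁.nonneg hμx0.le) (hγ₂.nonneg hμx0.le) (hV₁0 _) (hV₂0 _) hε₁ hε₂ hM0 hGM
        (by linarith [hb₁]) (by linarith [hb₂]) (hKdef ▸ hKW)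
    -- from the bound on W to the bound on norms
    set r₀ : ℝ := ‖χ₁ t₀‖ + ‖χ₂ t₀‖ with hr₀def
    have hr₀ : (0:ℝ) ≤ r₀ := add_nonneg (norm_nonneg _) (norm_nonneg _)
    have hn₁ : ‖χ₁ t₀‖ ∈ Ici (0:ℝ) := norm_nonneg _
    have hn₂ : ‖χ₂ t₀‖ ∈ Ici (0:ℝ) := norm_nonneg _
    have hr₀mem : r₀ ∈ Ici (0:ℝ) := hr₀
    have hcm0 : (0:ℝ) ≤ max c₁ 1 := le_trans zero_le_one (le_max_right _ _)
    have hmon₁ : αu₁ ‖χ₁ t₀‖ ≤ αu₁ r₀ :=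
      hαu₁.2.1.monotoneOn hn₁ hr₀mem (by rw [hr₀def]; linarith [norm_nonneg (χ₂ t₀)])
    have hmon₂ : αu₂ ‖χ₂ t₀‖ ≤ αu₂ r₀ :=
      hαu₂.2.1.monotoneOn hn₂ hr₀mem (by rw [hr₀def]; linarith [norm_nonneg (χ₁ t₀)])
    have hQ : W t₀ ≤ max c₁ 1 * (αu₁ r₀ + αu₂ r₀) := by
      have h1 : V₁ (χ₁ t₀) ≤ αu₁ ‖χ₁ t₀‖ := (hV₁ (χ₁ t₀)).2
      have h2 : V₂ (χ₂ t₀) ≤ αu₂ ‖χ₂ t₀‖ := (hV₂ (χ₂ t₀)).2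
      have hc₁cm : c₁ ≤ max c₁ 1 := le_max_left _ _
      have h1' : c₁ * V₁ (χ₁ t₀) ≤ max c₁ 1 * αu₁ r₀ := by
        have := hV₁0 (χ₁ t₀)
        nlinarith [hαu₁.nonneg (show (0:ℝ) ≤ ‖χ₁ t₀‖ from norm_nonneg _)]
      have h2' : V₂ (χ₂ t₀) ≤ max c₁ 1 * αu₂ r₀ := by
        have h2b : αu₂ ‖χ₂ t₀‖ ≤ max c₁ 1 * αu₂ r₀ :=
          le_trans hmon₂ (le_mul_of_one_le_left (hαu₂.nonneg hr₀) (le_max_right _ _))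
        linarith
      rw [hWdef]
      dsimp only
      nlinarith [h1']
    have hBQ : B ≤ max c₁ 1 * (αu₁ r₀ + αu₂ r₀) + K := by
      have hQ0 : 0 ≤ max c₁ 1 * (αu₁ r₀ + αu₂ r₀) :=
        mul_nonneg hcm0 (add_nonneg (hαu₁.nonneg hr₀) (hαu₂.nonneg hr₀))
      exact max_le (by linarith) (by linarith)
    have hPr₀ : P r₀ = (max c₁ 1 * (αu₁ r₀ + αu₂ r₀) + K) * (min c₁ 1)⁻¹ := rfl
    have hPmem : P r₀ ∈ Ici (0:ℝ) := hPmaps hr₀mem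
    -- V₁ (χ₁ t) ≤ P r₀ and V₂ (χ₂ t) ≤ P r₀
    have hWt : c₁ * V₁ (χ₁ t) + V₂ (χ₂ t) ≤ max c₁ 1 * (αu₁ r₀ + αu₂ r₀) + K :=
      le_trans hWle hBQ
    have hv₁P : αl₁ ‖χ₁ t‖ ≤ P r₀ := by
      rw [hPr₀, ← div_eq_mul_inv, le_div_iff₀ hminpos]
      have h1 : αl₁ ‖χ₁ t‖ ≤ V₁ (χ₁ t) := (hV₁ (χ₁ t)).1
      have h2 : min c₁ 1 ≤ c₁ := min_le_left _ _
      linarith [mul_le_mul_of_nonneg_right h1 hminpos.le,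
        mul_le_mul_of_nonneg_left h2 (hV₁0 (χ₁ t)), hWt, hV₂0 (χ₂ t)]
    have hv₂P : αl₂ ‖χ₂ t‖ ≤ P r₀ := by
      rw [hPr₀, ← div_eq_mul_inv, le_div_iff₀ hminpos]
      have h1 : αl₂ ‖χ₂ t‖ ≤ V₂ (χ₂ t) := (hV₂ (χ₂ t)).1
      have h2 : min c₁ 1 ≤ 1 := min_le_right _ _
      linarith [mul_le_mul_of_nonneg_right h1 hminpos.le,
        mul_le_mul_of_nonneg_left h2 (hV₂0 (χ₂ t)), hWt,
        mul_nonneg hc₁pos.le (hV₁0 (χ₁ t))]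
    obtain ⟨hψ₁0, hψ₁eq⟩ := hψ₁spec (P r₀) hPmem
    obtain ⟨hψ₂0, hψ₂eq⟩ := hψ₂spec (P r₀) hPmem
    have hb₁ : ‖χ₁ t‖ ≤ ψ₁ (P r₀) := by
      have : αl₁ ‖χ₁ t‖ ≤ αl₁ (ψ₁ (P r₀)) := by rw [hψ₁eq]; exact hv₁P
      exact (hαl₁.2.1.le_iff_le (norm_nonneg _) hψ₁0).mp this
    have hb₂ : ‖χ₂ t‖ ≤ ψ₂ (P r₀) := by
      have : αl₂ ‖χ₂ t‖ ≤ αl₂ (ψ₂ (P r₀)) := by rw [hψ₂eq]; exact hv₂P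
      exact (hαl₂.2.1.le_iff_le (norm_nonneg _) hψ₂0).mp this
    exact add_le_add hb₁ hb₂
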